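/- Let p, q be nonzero vectors in ℝ³ and let d be a unit vector orthogonal to p. Then |⟨d, q/‖q‖⟩| ≤ ‖p − q‖ / min(‖p‖, ‖q‖). -/

import Mathlib

/-- Let `p, q` be nonzero vectors in `ℝ³` and let `d` be a unit vector orthogonal to `p`.
Then `|⟨d, q/‖q‖⟩| ≤ ‖p − q‖ / min (‖p‖, ‖q‖)`. -/
theorem abs_inner_unit_orthogonal_normalize_le
    (p q d : EuclideanSpace ℝ (Fin 3)) (hp : p ≠ 0) (hq : q ≠ 0)
    (hd : ‖d‖ = 1) (hdp : (inner ℝ d p : ℝ) = 0) :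
    |(inner ℝ d (‖q‖⁻¹ • q) : ℝ)| ≤ ‖p - q‖ / min ‖p‖ ‖q‖ := by
  have hqn : (0:ℝ) < ‖q‖ := norm_pos_iff.mpr hq
  have hmin : (0:ℝ) < min ‖p‖ ‖q‖ := lt_min (norm_pos_iff.mpr hp) hqn
  have h1 : (inner ℝ d (‖q‖⁻¹ • q) : ℝ) = (inner ℝ d (q - p) : ℝ) / ‖q‖ := by
    rw [inner_smul_right, inner_sub_right, hdp]
    ring
  rw [h1, abs_div, abs_of_pos hqn]
  have h2 : |(inner ℝ d (q - p) : ℝ)| ≤ ‖p - q‖ := by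
    calc |(inner ℝ d (q - p) : ℝ)| ≤ ‖d‖ * ‖q - p‖ := abs_real_inner_le_norm _ _
      _ = ‖p - q‖ := by rw [hd, one_mul, norm_sub_rev]
  calc |(inner ℝ d (q - p) : ℝ)| / ‖q‖ ≤ ‖p - q‖ / ‖q‖ := by
        gcongr
      _ ≤ ‖p - q‖ / min ‖p‖ ‖q‖ := by
        apply div_le_div_of_nonneg_left (norm_nonneg _) hmin (min_le_right _ _)
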